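/- Let E be an exact couple system over a bounded poset I, and for p ∈ I let Q_p := D_∞ / ker(j_{∞,p} : D_∞ → E^∞_p). Then: (a) the map Q_p → S^{∞,−∞}_{∞,p} sending the coset of w ∈ D_∞ to the class of j_{∞,p}(w) is a well-defined isomorphism; (b) for q ≤ p one has ker(j_{∞,q}) ⊆ ker(j_{∞,p}), so the identity of D_∞ induces a surjection Q_q → Q_p; the map ℓ : E^p_q → E^∞_q induces an injective homomorphism S^{p,−∞}_{∞,q} → S^{∞,−∞}_{∞,q} whose image corresponds, under the isomorphism of (a) for Q_q, to ker(Q_q → Q_p); consequently S^{p,−∞}_{∞,q} ≅ ker(Q_q → Q_p). -/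

import Mathlib

open Function

universe u v

/-- An exact couple system over a bounded poset `I`: abelian groups `E^p_q` for `q ≤ p`,
functorial maps `ℓ`, boundary maps `k_{pq} : E^p_q → D_q` (where `D_p := E^p_⊥`), exact
triangles `D_q → D_p → E^p_q → D_q`, and naturality of `k`. -/
structure ExactCoupleSystem (I : Type u) [PartialOrder I] [BoundedOrder I] where
  /-- the abelian groups `E^p_q` -/
  E : ∀ p q : I, q ≤ p → AddCommGrpCat.{v}
  /-- the structure maps `ℓ : E^p_q → E^{p'}_{q'}` for `p ≤ p'`, `q ≤ q'` -/
  l : ∀ {p q p' q' : I} (h : q ≤ p) (h' : q' ≤ p'), p ≤ p' → q ≤ q' →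
      (E p q h →+ E p' q' h')
  /-- the boundary maps `k_{pq} : E^p_q → D_q` -/
  k : ∀ {p q : I} (h : q ≤ p), (E p q h →+ E q ⊥ bot_le)
  l_id : ∀ {p q : I} (h : q ≤ p), l h h le_rfl le_rfl = AddMonoidHom.id _
  l_comp : ∀ {p q p' q' p'' q'' : I} (h : q ≤ p) (h' : q' ≤ p') (h'' : q'' ≤ p'')
      (hp : p ≤ p') (hq : q ≤ q') (hp' : p' ≤ p'') (hq' : q' ≤ q''),
      (l h' h'' hp' hq').comp (l h h' hp hq) = l h h'' (hp.trans hp') (hq.trans hq')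
  exact_ij : ∀ {p q : I} (h : q ≤ p),
      (l (bot_le : (⊥ : I) ≤ q) (bot_le : (⊥ : I) ≤ p) h le_rfl).range =
        (l (bot_le : (⊥ : I) ≤ p) h le_rfl bot_le).ker
  exact_jk : ∀ {p q : I} (h : q ≤ p),
      (l (bot_le : (⊥ : I) ≤ p) h le_rfl bot_le).range = (k h).ker
  exact_ki : ∀ {p q : I} (h : q ≤ p),
      (k h).range = (l (bot_le : (⊥ : I) ≤ q) (bot_le : (⊥ : I) ≤ p) h le_rfl).ker
  k_nat : ∀ {p q p' q' : I} (h : q ≤ p) (h' : q' ≤ p') (hp : p ≤ p') (hq : q ≤ q'),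
      (l (bot_le : (⊥ : I) ≤ q) (bot_le : (⊥ : I) ≤ q') hq le_rfl).comp (k h) =
        (k h').comp (l h h' hp hq)

namespace ExactCoupleSystem

variable {I : Type u} [PartialOrder I] [BoundedOrder I] (X : ExactCoupleSystem.{u, v} I)

/-- `D_p := E^p_{−∞}`. -/
abbrev D (p : I) := X.E p ⊥ bot_le

/-- `i_{qp} : D_q → D_p`. -/
def i {q p : I} (h : q ≤ p) : X.D q →+ X.D p := X.l bot_le bot_le h le_rfl

/-- `j_{pq} : D_p → E^p_q`. -/
def j {q p : I} (h : q ≤ p) : X.D p →+ X.E p q h := X.l bot_le h le_rfl bot_le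

/-- The differential `d_{pqz} = j_{qz} ∘ k_{pq} : E^p_q → E^q_z`. -/
def dd {z q p : I} (hzq : z ≤ q) (hqp : q ≤ p) : X.E p q hqp →+ X.E q z hzq :=
  (X.j hzq).comp (X.k hqp)

/-- The S-term `S^{pz}_{bq} = ker(d_{pqz}) / im(d_{bpq})` of an exact couple system. -/
abbrev Sterm {z q p b : I} (hzq : z ≤ q) (hqp : q ≤ p) (hpb : p ≤ b) :=
  ↥(X.dd hzq hqp).ker ⧸ (X.dd hqp hpb).range.addSubgroupOf (X.dd hzq hqp).ker

/-- The class in `S^{pz}_{bq}` of an element `x ∈ ker(d_{pqz})`. -/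
def Scls {z q p b : I} (hzq : z ≤ q) (hqp : q ≤ p) (hpb : p ≤ b)
    {x : X.E p q hqp} (hx : x ∈ (X.dd hzq hqp).ker) : X.Sterm hzq hqp hpb :=
  QuotientAddGroup.mk ⟨x, hx⟩

end ExactCoupleSystem

namespace ExactCoupleSystem

section Helpers

variable {I : Type u} [PartialOrder I] [BoundedOrder I] (X : ExactCoupleSystem.{u, v} I)

lemma l_l {p q p' q' p'' q'' : I} (h : q ≤ p) (h' : q' ≤ p') (h'' : q'' ≤ p'')
    (hp : p ≤ p') (hq : q ≤ q') (hp' : p' ≤ p'') (hq' : q' ≤ q'') (x : X.E p q h) :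
    X.l h' h'' hp' hq' (X.l h h' hp hq x) = X.l h h'' (hp.trans hp') (hq.trans hq') x :=
  DFunLike.congr_fun (X.l_comp h h' h'' hp hq hp' hq') x

lemma j_bot_apply (p : I) (x : X.D p) : X.j (bot_le : (⊥ : I) ≤ p) x = x :=
  DFunLike.congr_fun (X.l_id (bot_le : (⊥ : I) ≤ p)) x

lemma dd_bot_apply {q p : I} (h : q ≤ p) (x : X.E p q h) :
    X.dd (bot_le : (⊥ : I) ≤ q) h x = X.k h x := X.j_bot_apply q _

lemma mem_ker_dd_bot {q p : I} (h : q ≤ p) (x : X.E p q h) :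
    x ∈ (X.dd (bot_le : (⊥ : I) ≤ q) h).ker ↔ X.k h x = 0 := by
  rw [AddMonoidHom.mem_ker, dd_bot_apply]

lemma k_top_apply (x : X.E ⊤ ⊤ le_rfl) : X.k (le_refl (⊤ : I)) x = 0 := by
  have h1 : X.k (le_refl (⊤ : I)) x ∈
      (X.l (bot_le : (⊥ : I) ≤ ⊤) (bot_le : (⊥ : I) ≤ ⊤) (le_refl (⊤ : I)) le_rfl).ker := by
    rw [← X.exact_ki (le_refl (⊤ : I))]; exact ⟨x, rfl⟩
  rw [AddMonoidHom.mem_ker] at h1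
  have h2 := DFunLike.congr_fun (X.l_id (bot_le : (⊥ : I) ≤ ⊤)) (X.k (le_refl (⊤ : I)) x)
  exact h2.symm.trans h1

lemma dd_top_range (p : I) :
    (X.dd (le_top : p ≤ ⊤) (le_refl (⊤ : I))).range = ⊥ := by
  rw [AddSubgroup.eq_bot_iff_forall]
  rintro _ ⟨x, rfl⟩
  show X.j (le_top : p ≤ ⊤) (X.k (le_refl (⊤ : I)) x) = 0
  rw [X.k_top_apply, map_zero]

lemma k_j_apply {q p : I} (h : q ≤ p) (w : X.D p) : X.k h (X.j h w) = 0 := by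
  have h1 : X.j h w ∈ (X.k h).ker := by
    rw [← X.exact_jk h]; exact ⟨w, rfl⟩
  exact h1

lemma j_mem_ker_dd (p : I) (w : X.D ⊤) :
    X.j (le_top : p ≤ ⊤) w ∈ (X.dd (bot_le : (⊥ : I) ≤ p) le_top).ker := by
  rw [mem_ker_dd_bot]; exact X.k_j_apply le_top w

/-- `ℓ ∘ j_{pq} = j_{∞q} ∘ i_{p∞}` pointwise. -/
lemma l_j {q p : I} (hqp : q ≤ p) (u : X.D p) :
    X.l hqp (le_top : q ≤ ⊤) le_top le_rfl (X.j hqp u) =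
      X.j (le_top : q ≤ ⊤) (X.i (le_top : p ≤ ⊤) u) :=
  (X.l_l (bot_le : (⊥ : I) ≤ p) hqp (le_top : q ≤ ⊤) le_rfl bot_le le_top le_rfl u).trans
    (X.l_l (bot_le : (⊥ : I) ≤ p) (bot_le : (⊥ : I) ≤ ⊤) (le_top : q ≤ ⊤)
      le_top le_rfl le_rfl bot_le u).symm

lemma i_k (p : I) (e : X.E ⊤ p le_top) : X.i (le_top : p ≤ ⊤) (X.k (le_top : p ≤ ⊤) e) = 0 := by
  have h1 : X.k (le_top : p ≤ ⊤) e ∈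
      (X.l (bot_le : (⊥ : I) ≤ p) (bot_le : (⊥ : I) ≤ ⊤) le_top le_rfl).ker := by
    rw [← X.exact_ki (le_top : p ≤ ⊤)]; exact ⟨e, rfl⟩
  exact h1

/-- The natural map `Q_p → S^{∞⊥}_{∞p}`. -/
noncomputable def phi (p : I) :
    (X.D ⊤ ⧸ (X.j (le_top : p ≤ ⊤)).ker) →+
      X.Sterm (bot_le : (⊥ : I) ≤ p) (le_top : p ≤ ⊤) (le_refl (⊤ : I)) :=
  QuotientAddGroup.lift _
    ((QuotientAddGroup.mk' _).comp
      ((X.j (le_top : p ≤ ⊤)).codRestrict _ (fun w => X.j_mem_ker_dd p w)))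
    (by
      intro w hw
      have h0 : ((X.j (le_top : p ≤ ⊤)).codRestrict _ (fun w => X.j_mem_ker_dd p w)) w = 0 :=
        Subtype.ext hw
      show QuotientAddGroup.mk' _ _ = 0
      rw [h0, map_zero])

lemma phi_mk (p : I) (w : X.D ⊤) :
    X.phi p (QuotientAddGroup.mk w) =
      X.Scls (bot_le : (⊥ : I) ≤ p) (le_top : p ≤ ⊤) (le_refl (⊤ : I)) (X.j_mem_ker_dd p w) :=
  rfl

lemma phi_spec (p : I) (w : X.D ⊤)
    (hkw : X.j (le_top : p ≤ ⊤) w ∈ (X.dd (bot_le : (⊥ : I) ≤ p) le_top).ker) :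
    X.phi p (QuotientAddGroup.mk w) =
      X.Scls (bot_le : (⊥ : I) ≤ p) (le_top : p ≤ ⊤) (le_refl (⊤ : I)) hkw :=
  rfl

lemma phi_bijective (p : I) : Bijective (X.phi p) := by
  constructor
  · rw [injective_iff_map_eq_zero]
    intro a ha
    obtain ⟨w, rfl⟩ := QuotientAddGroup.mk_surjective a
    rw [X.phi_mk] at ha
    have ha2 := (QuotientAddGroup.eq_zero_iff
      (⟨X.j (le_top : p ≤ ⊤) w, X.j_mem_ker_dd p w⟩ :
        (X.dd (bot_le : (⊥ : I) ≤ p) le_top).ker)).mp ha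
    rw [AddSubgroup.mem_addSubgroupOf, X.dd_top_range, AddSubgroup.mem_bot] at ha2
    exact (QuotientAddGroup.eq_zero_iff w).mpr ha2
  · intro s
    obtain ⟨y, rfl⟩ := QuotientAddGroup.mk_surjective s
    obtain ⟨x, hx⟩ := y
    have hk : X.k (le_top : p ≤ ⊤) x = 0 := (X.mem_ker_dd_bot le_top x).mp hx
    obtain ⟨w, hw⟩ : x ∈ (X.l (bot_le : (⊥ : I) ≤ ⊤) (le_top : p ≤ ⊤) le_rfl bot_le).range := by
      rw [X.exact_jk (le_top : p ≤ ⊤)]; exact hk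
    exact ⟨QuotientAddGroup.mk w,
      (X.phi_mk p w).trans (congrArg QuotientAddGroup.mk (Subtype.ext hw))⟩

end Helpers

section PartB

variable {I : Type u} [PartialOrder I] [BoundedOrder I] (X : ExactCoupleSystem.{u, v} I)
variable {q p : I} (hqp : q ≤ p)

include hqp

lemma ker_mono : (X.j (le_top : q ≤ ⊤)).ker ≤ (X.j (le_top : p ≤ ⊤)).ker := by
  intro w hw
  rw [AddMonoidHom.mem_ker] at hw ⊢
  calc X.j (le_top : p ≤ ⊤) w
      = X.l (le_top : q ≤ ⊤) (le_top : p ≤ ⊤) le_rfl hqp (X.j (le_top : q ≤ ⊤) w) :=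
        (X.l_l (bot_le : (⊥ : I) ≤ ⊤) (le_top : q ≤ ⊤) (le_top : p ≤ ⊤)
          le_rfl bot_le le_rfl hqp w).symm
    _ = 0 := by rw [hw, map_zero]

/-- The surjection `Q_q → Q_p` induced by the identity. -/
noncomputable def sig : (X.D ⊤ ⧸ (X.j (le_top : q ≤ ⊤)).ker) →+
    (X.D ⊤ ⧸ (X.j (le_top : p ≤ ⊤)).ker) :=
  QuotientAddGroup.map _ _ (AddMonoidHom.id _) (fun w hw => X.ker_mono hqp hw)

lemma sig_mk (w : X.D ⊤) :
    X.sig hqp (QuotientAddGroup.mk w) = QuotientAddGroup.mk w := rfl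

lemma l_mem_ker {x : X.E p q hqp} (hx : x ∈ (X.dd (bot_le : (⊥ : I) ≤ q) hqp).ker) :
    X.l hqp (le_top : q ≤ ⊤) le_top le_rfl x ∈
      (X.dd (bot_le : (⊥ : I) ≤ q) (le_top : q ≤ ⊤)).ker := by
  rw [mem_ker_dd_bot] at hx ⊢
  have hnat := DFunLike.congr_fun (X.k_nat hqp (le_top : q ≤ ⊤) le_top le_rfl) x
  have hid := DFunLike.congr_fun (X.l_id (bot_le : (⊥ : I) ≤ q)) (X.k hqp x)
  calc X.k (le_top : q ≤ ⊤) (X.l hqp (le_top : q ≤ ⊤) le_top le_rfl x)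
      = X.l (bot_le : (⊥ : I) ≤ q) (bot_le : (⊥ : I) ≤ q) le_rfl le_rfl (X.k hqp x) := hnat.symm
    _ = X.k hqp x := hid
    _ = 0 := hx

/-- The injection `S^{p⊥}_{∞q} → S^{∞⊥}_{∞q}` induced by `ℓ`. -/
noncomputable def tau : X.Sterm (bot_le : (⊥ : I) ≤ q) hqp (le_top : p ≤ ⊤) →+
    X.Sterm (bot_le : (⊥ : I) ≤ q) (le_top : q ≤ ⊤) (le_refl (⊤ : I)) :=
  QuotientAddGroup.lift _
    ((QuotientAddGroup.mk' _).comp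
      (((X.l hqp (le_top : q ≤ ⊤) le_top le_rfl).comp
          (AddSubgroup.subtype (X.dd (bot_le : (⊥ : I) ≤ q) hqp).ker)).codRestrict _
        (fun y => X.l_mem_ker hqp y.2)))
    (by
      intro y hy
      rw [AddSubgroup.mem_addSubgroupOf] at hy
      obtain ⟨e, he⟩ := hy
      have h0 : X.l hqp (le_top : q ≤ ⊤) le_top le_rfl (y : X.E p q hqp) = 0 := by
        rw [← he]
        exact (X.l_j hqp (X.k (le_top : p ≤ ⊤) e)).trans (by rw [X.i_k, map_zero])
      have h1 : (((X.l hqp (le_top : q ≤ ⊤) le_top le_rfl).comp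
          (AddSubgroup.subtype (X.dd (bot_le : (⊥ : I) ≤ q) hqp).ker)).codRestrict _
        (fun y => X.l_mem_ker hqp y.2)) y = 0 := Subtype.ext h0
      show QuotientAddGroup.mk' _ _ = 0
      rw [h1, map_zero])

lemma tau_spec (x : X.E p q hqp) (hx : x ∈ (X.dd (bot_le : (⊥ : I) ≤ q) hqp).ker)
    (hx' : X.l hqp (le_top : q ≤ ⊤) (le_top : p ≤ ⊤) le_rfl x ∈
      (X.dd (bot_le : (⊥ : I) ≤ q) (le_top : q ≤ ⊤)).ker) :
    X.tau hqp (X.Scls (bot_le : (⊥ : I) ≤ q) hqp (le_top : p ≤ ⊤) hx) =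
      X.Scls (bot_le : (⊥ : I) ≤ q) (le_top : q ≤ ⊤) (le_refl (⊤ : I)) hx' :=
  rfl

lemma tau_inj : Injective (X.tau hqp) := by
  rw [injective_iff_map_eq_zero]
  intro a ha
  obtain ⟨y, rfl⟩ := QuotientAddGroup.mk_surjective a
  obtain ⟨x, hx⟩ := y
  have ha2 := (QuotientAddGroup.eq_zero_iff
      (⟨X.l hqp (le_top : q ≤ ⊤) le_top le_rfl x, X.l_mem_ker hqp hx⟩ :
        (X.dd (bot_le : (⊥ : I) ≤ q) (le_top : q ≤ ⊤)).ker)).mp ha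
  rw [AddSubgroup.mem_addSubgroupOf, X.dd_top_range, AddSubgroup.mem_bot] at ha2
  have hk : X.k hqp x = 0 := (X.mem_ker_dd_bot hqp x).mp hx
  obtain ⟨u, hu⟩ : x ∈ (X.l (bot_le : (⊥ : I) ≤ p) hqp le_rfl bot_le).range := by
    rw [X.exact_jk hqp]; exact hk
  have h2 : X.j (le_top : q ≤ ⊤) (X.i (le_top : p ≤ ⊤) u) = 0 :=
    ((X.l_j hqp u).symm.trans
      (congrArg (X.l hqp (le_top : q ≤ ⊤) le_top le_rfl) hu)).trans ha2
  obtain ⟨v, hv⟩ : X.i (le_top : p ≤ ⊤) u ∈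
      (X.l (bot_le : (⊥ : I) ≤ q) (bot_le : (⊥ : I) ≤ ⊤) le_top le_rfl).range := by
    rw [X.exact_ij (le_top : q ≤ ⊤)]; exact h2
  have h3 : X.i (le_top : p ≤ ⊤) (u - X.i hqp v) = 0 := by
    rw [map_sub, sub_eq_zero]
    exact ((X.l_l (bot_le : (⊥ : I) ≤ q) (bot_le : (⊥ : I) ≤ p) (bot_le : (⊥ : I) ≤ ⊤)
      hqp le_rfl le_top le_rfl v).trans hv).symm
  obtain ⟨e, he⟩ : u - X.i hqp v ∈ (X.k (le_top : p ≤ ⊤)).range := by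
    rw [X.exact_ki (le_top : p ≤ ⊤)]; exact h3
  have h4 : X.j hqp (X.i hqp v) = 0 := by
    have h4' : X.i hqp v ∈ (X.l (bot_le : (⊥ : I) ≤ p) hqp le_rfl bot_le).ker := by
      rw [← X.exact_ij hqp]; exact ⟨v, rfl⟩
    exact h4'
  have h5 : X.dd hqp (le_top : p ≤ ⊤) e = x := by
    show X.j hqp (X.k (le_top : p ≤ ⊤) e) = x
    rw [he, map_sub, h4, sub_zero]
    exact hu
  exact (QuotientAddGroup.eq_zero_iff
    (⟨x, hx⟩ : (X.dd (bot_le : (⊥ : I) ≤ q) hqp).ker)).mpr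
    ((AddSubgroup.mem_addSubgroupOf).mpr ⟨e, h5⟩)

lemma tau_range : (X.tau hqp).range = ((X.sig hqp).ker.map (X.phi q)) := by
  ext s
  constructor
  · rintro ⟨z, rfl⟩
    obtain ⟨y, rfl⟩ := QuotientAddGroup.mk_surjective z
    obtain ⟨x, hx⟩ := y
    have hk : X.k hqp x = 0 := (X.mem_ker_dd_bot hqp x).mp hx
    obtain ⟨u, hu⟩ : x ∈ (X.l (bot_le : (⊥ : I) ≤ p) hqp le_rfl bot_le).range := by
      rw [X.exact_jk hqp]; exact hk
    refine ⟨QuotientAddGroup.mk (X.i (le_top : p ≤ ⊤) u), ?_, ?_⟩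
    · show X.sig hqp _ = 0
      rw [X.sig_mk]
      refine (QuotientAddGroup.eq_zero_iff _).mpr ?_
      have hm : X.i (le_top : p ≤ ⊤) u ∈
          (X.l (bot_le : (⊥ : I) ≤ ⊤) (le_top : p ≤ ⊤) le_rfl bot_le).ker := by
        rw [← X.exact_ij (le_top : p ≤ ⊤)]; exact ⟨u, rfl⟩
      exact hm
    · exact congrArg QuotientAddGroup.mk (Subtype.ext ((X.l_j hqp u).symm.trans
        (congrArg (X.l hqp (le_top : q ≤ ⊤) le_top le_rfl) hu)))
  · rintro ⟨c, hc, rfl⟩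
    obtain ⟨w, rfl⟩ := QuotientAddGroup.mk_surjective c
    have hc' : X.sig hqp (QuotientAddGroup.mk w) = 0 := hc
    rw [X.sig_mk] at hc'
    have hc2 : w ∈ (X.j (le_top : p ≤ ⊤)).ker := (QuotientAddGroup.eq_zero_iff w).mp hc'
    obtain ⟨u, hu⟩ : w ∈
        (X.l (bot_le : (⊥ : I) ≤ p) (bot_le : (⊥ : I) ≤ ⊤) le_top le_rfl).range := by
      rw [X.exact_ij (le_top : p ≤ ⊤)]; exact hc2
    refine ⟨QuotientAddGroup.mk (⟨X.j hqp u, (X.mem_ker_dd_bot hqp _).mpr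
      (X.k_j_apply hqp u)⟩ : (X.dd (bot_le : (⊥ : I) ≤ q) hqp).ker), ?_⟩
    exact congrArg QuotientAddGroup.mk (Subtype.ext ((X.l_j hqp u).trans
      (congrArg (X.j (le_top : q ≤ ⊤)) hu)))

end PartB

end ExactCoupleSystem

/-- ∞-page as quotient kernels: with `Q_p := D_∞/ker(j_{∞,p})`:
(a) the coset of `w` ↦ class of `j_{∞,p}(w)` is a well-defined isomorphism
`Q_p ≅ S^{∞,−∞}_{∞,p}`; (b) for `q ≤ p`, `ker(j_{∞,q}) ⊆ ker(j_{∞,p})`, the identity of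
`D_∞` induces a surjection `Q_q → Q_p`, and `ℓ` induces an injection
`S^{p,−∞}_{∞,q} → S^{∞,−∞}_{∞,q}` whose image corresponds to `ker(Q_q → Q_p)` under the
isomorphism of (a); hence `S^{p,−∞}_{∞,q} ≅ ker(Q_q → Q_p)`. -/
theorem statement15 {I : Type u} [PartialOrder I] [BoundedOrder I]
    (X : ExactCoupleSystem.{u, v} I) {q p : I} (hqp : q ≤ p) :
    (∃ φ : (X.D ⊤ ⧸ (X.j (le_top : p ≤ ⊤)).ker) →+
        X.Sterm (bot_le : (⊥ : I) ≤ p) (le_top : p ≤ ⊤) (le_refl (⊤ : I)),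
      (∀ (w : X.D ⊤)
        (hkw : X.j (le_top : p ≤ ⊤) w ∈ (X.dd (bot_le : (⊥ : I) ≤ p) le_top).ker),
        φ (QuotientAddGroup.mk w) =
          X.Scls (bot_le : (⊥ : I) ≤ p) (le_top : p ≤ ⊤) (le_refl (⊤ : I)) hkw) ∧
      Bijective φ) ∧
    (X.j (le_top : q ≤ ⊤)).ker ≤ (X.j (le_top : p ≤ ⊤)).ker ∧
    ∃ (φq : (X.D ⊤ ⧸ (X.j (le_top : q ≤ ⊤)).ker) →+
        X.Sterm (bot_le : (⊥ : I) ≤ q) (le_top : q ≤ ⊤) (le_refl (⊤ : I)))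
      (σ : (X.D ⊤ ⧸ (X.j (le_top : q ≤ ⊤)).ker) →+
        (X.D ⊤ ⧸ (X.j (le_top : p ≤ ⊤)).ker))
      (τ : X.Sterm (bot_le : (⊥ : I) ≤ q) hqp (le_top : p ≤ ⊤) →+
        X.Sterm (bot_le : (⊥ : I) ≤ q) (le_top : q ≤ ⊤) (le_refl (⊤ : I))),
      (∀ (w : X.D ⊤)
        (hkw : X.j (le_top : q ≤ ⊤) w ∈ (X.dd (bot_le : (⊥ : I) ≤ q) le_top).ker),
        φq (QuotientAddGroup.mk w) =
          X.Scls (bot_le : (⊥ : I) ≤ q) (le_top : q ≤ ⊤) (le_refl (⊤ : I)) hkw) ∧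
      Bijective φq ∧
      (∀ w : X.D ⊤, σ (QuotientAddGroup.mk w) = QuotientAddGroup.mk w) ∧
      Surjective σ ∧
      (∀ (x : X.E p q hqp) (hx : x ∈ (X.dd (bot_le : (⊥ : I) ≤ q) hqp).ker)
        (hx' : X.l hqp (le_top : q ≤ ⊤) (le_top : p ≤ ⊤) le_rfl x ∈
          (X.dd (bot_le : (⊥ : I) ≤ q) (le_top : q ≤ ⊤)).ker),
        τ (X.Scls (bot_le : (⊥ : I) ≤ q) hqp (le_top : p ≤ ⊤) hx) =
          X.Scls (bot_le : (⊥ : I) ≤ q) (le_top : q ≤ ⊤) (le_refl (⊤ : I)) hx') ∧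
      Injective τ ∧
      τ.range = σ.ker.map φq ∧
      Nonempty (X.Sterm (bot_le : (⊥ : I) ≤ q) hqp (le_top : p ≤ ⊤) ≃+ ↥σ.ker) := by
  refine ⟨⟨X.phi p, fun w hkw => X.phi_spec p w hkw, X.phi_bijective p⟩,
    X.ker_mono hqp,
    X.phi q, X.sig hqp, X.tau hqp,
    fun w hkw => X.phi_spec q w hkw,
    X.phi_bijective q,
    fun w => X.sig_mk hqp w,
    ?_,
    fun x hx hx' => X.tau_spec hqp x hx hx',
    X.tau_inj hqp,
    X.tau_range hqp,
    ?_⟩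
  · intro c
    obtain ⟨w, rfl⟩ := QuotientAddGroup.mk_surjective c
    exact ⟨QuotientAddGroup.mk w, X.sig_mk hqp w⟩
  · have hco : ((AddEquiv.ofBijective (X.phi q) (X.phi_bijective q) :
        (X.D ⊤ ⧸ (X.j (le_top : q ≤ ⊤)).ker) ≃+ _) :
        (X.D ⊤ ⧸ (X.j (le_top : q ≤ ⊤)).ker) →+ _) = X.phi q :=
      AddMonoidHom.ext fun _ => rfl
    refine ⟨(AddMonoidHom.ofInjective (X.tau_inj hqp)).trans
      ((AddEquiv.addSubgroupCongr ?_).trans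
        ((AddEquiv.ofBijective (X.phi q) (X.phi_bijective q)).addSubgroupMap
          (X.sig hqp).ker).symm)⟩
    rw [hco]
    exact X.tau_range hqp
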